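/- arXiv:2507.22642 — 2 statements merged into one kernel-verified Lean document; each statement's English description precedes it below -/
import Mathlib

section
/- Let X = exp(x)∂_y and H = ∂_x in V(ℂ²), and let d ∈ ℂ. If a vector field V = exp(dx)(f(y)∂_x + g(y)∂_y), with f, g entire, satisfies [X,V] = 0, then there exist constants κ, ℓ ∈ ℂ such that V = exp(dx)(κ∂_x + (κy + ℓ)∂_y). -/
open Complex Module Set

set_option synthInstance.maxHeartbeats 1000000
set_option maxHeartbeats 1000000

noncomputable section

/-- The algebra of entire (holomorphic) functions on `ℂ²`. -/
def Entire : Subalgebra ℂ (ℂ × ℂ → ℂ) where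
  carrier := {f | AnalyticOnNhd ℂ f Set.univ}
  mul_mem' hf hg := hf.mul hg
  add_mem' hf hg := hf.add hg
  one_mem' := analyticOnNhd_const
  zero_mem' := analyticOnNhd_const
  algebraMap_mem' _ := analyticOnNhd_const

/-- The Lie algebra `V(ℂ²)` of holomorphic vector fields on `ℂ²`, i.e. derivations
`F(x,y)∂ₓ + G(x,y)∂_y` of the ℂ-algebra of entire functions on `ℂ²`, with bracket the
commutator of derivations. -/
abbrev VF := Derivation ℂ Entire Entire

instance (M : Submodule ℂ VF) : AddCommGroup ↥M := @Submodule.addCommGroup ℂ VF _ _ _ M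

/- Shortcut instances, to speed up elaboration. -/
@[reducible] instance (priority := 10000) : AddCommMonoid Entire := inferInstance
instance (priority := 10000) : SMulCommClass ℂ Entire Entire := inferInstance
@[reducible] instance (priority := 10000) : SMul Entire VF := inferInstance
@[reducible] instance (priority := 10000) : SMul ℂ VF := inferInstance
@[reducible] instance (priority := 10000) : LieRing VF := inferInstance
@[reducible] instance (priority := 10000) : AddCommGroup VF := inferInstance

theorem Entire.diffAt (f : Entire) (p : ℂ × ℂ) : DifferentiableAt ℂ (f : ℂ × ℂ → ℂ) p :=
  (f.2 p trivial).differentiableAt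

theorem Entire.fderiv_mem {f : ℂ × ℂ → ℂ} (hf : f ∈ Entire) (v : ℂ × ℂ) :
    (fun p => fderiv ℂ f p v) ∈ Entire := fun p _ =>
  ((ContinuousLinearMap.apply ℂ ℂ v).analyticAt _).comp ((hf.fderiv) p trivial)

/-- The constant-coefficient vector field in the direction `v`. -/
def Dvec (v : ℂ × ℂ) : VF where
  toFun f := ⟨fun p => fderiv ℂ (f : ℂ × ℂ → ℂ) p v, Entire.fderiv_mem f.2 v⟩
  map_add' f g := Subtype.ext <| funext fun p => by
    show fderiv ℂ ((f : ℂ × ℂ → ℂ) + (g : ℂ × ℂ → ℂ)) p v = _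
    rw [fderiv_add (Entire.diffAt f p) (Entire.diffAt g p)]
    rfl
  map_smul' c f := Subtype.ext <| funext fun p => by
    show fderiv ℂ (c • (f : ℂ × ℂ → ℂ)) p v = _
    rw [fderiv_const_smul (Entire.diffAt f p) c]
    rfl
  map_one_eq_zero' := Subtype.ext <| funext fun p => by
    show fderiv ℂ (fun _ => (1 : ℂ)) p v = 0
    rw [fderiv_const_apply]
    rfl
  leibniz' f g := Subtype.ext <| funext fun p => by
    show fderiv ℂ (fun q => (f : ℂ × ℂ → ℂ) q * (g : ℂ × ℂ → ℂ) q) p v = _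
    rw [fderiv_fun_mul (Entire.diffAt f p) (Entire.diffAt g p)]
    show (f : ℂ × ℂ → ℂ) p • fderiv ℂ (g : ℂ × ℂ → ℂ) p v
      + (g : ℂ × ℂ → ℂ) p • fderiv ℂ (f : ℂ × ℂ → ℂ) p v = _
    rfl

/-- The coordinate vector field `∂ₓ`. -/
def Dx : VF := Dvec (1, 0)

/-- The coordinate vector field `∂_y`. -/
def Dy : VF := Dvec (0, 1)

/-- The entire function `exp (c·x)`. -/
def ex (c : ℂ) : Entire :=
  ⟨fun p => Complex.exp (c * p.1), fun p _ =>
    analyticAt_cexp.comp ((analyticAt_const (v := c)).mul (analyticAt_fst (p := p)))⟩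

/-- The entire function `y` (the second coordinate). -/
def yc : Entire := ⟨fun p => p.2, fun _ _ => analyticAt_snd⟩

/-- The entire function `f(y)` built from an entire function `f` of one variable. -/
def ofY (f : ℂ → ℂ) (hf : AnalyticOnNhd ℂ f Set.univ) : Entire :=
  ⟨fun p => f p.2, fun p _ => (hf p.2 trivial).comp analyticAt_snd⟩

/-- `X = exp(x)∂_y`, the first generator of the type (II) realization of `sl(2,ℂ)`. -/
def Xb : VF := ex 1 • Dy

/-- `Y = exp(−x)(y∂ₓ + (y²/2 + ε)∂_y)`, the second generator of the type (II)_ε realization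
of `sl(2,ℂ)`. -/
def Yb (ε : ℂ) : VF :=
  (ex (-1) * yc) • Dx + (ex (-1) * (((1 : ℂ) / 2) • yc ^ 2 + algebraMap ℂ Entire ε)) • Dy

/-- The type (II)_ε realization of `sl(2,ℂ)` in `V(ℂ²)`: the span of `X = exp(x)∂_y`,
`Y = exp(−x)(y∂ₓ + (y²/2 + ε)∂_y)` and `H = [X,Y]`. -/
def typeII (ε : ℂ) : LieSubalgebra ℂ VF := LieSubalgebra.lieSpan ℂ VF {Xb, Yb ε, ⁅Xb, Yb ε⁆}

/-- `H = [X,Y]` for the type (II)_ε realization. -/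
def Hb (ε : ℂ) : VF := ⁅Xb, Yb ε⁆

/-- The vector field `W = ∂ₓ + y∂_y`. -/
def Wvf : VF := Dx + yc • Dy

/-- The vector field `exp(dx)(∂ₓ + y∂_y)`. -/
def Vvf (d : ℂ) : VF := ex d • (Dx + yc • Dy)

/-- The vector field `exp(dx)∂_y`. -/
def Evf (d : ℂ) : VF := ex d • Dy

/-- The vector field `exp(dx)(∂ₓ + (y + ℓ)∂_y)`. -/
def Vlvf (d l : ℂ) : VF := ex d • (Dx + (yc + algebraMap ℂ Entire l) • Dy)


/-- The entire function `x` (the first coordinate). -/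
def xc : Entire := ⟨fun p => p.1, fun _ _ => analyticAt_fst⟩

lemma Dvec_apply (v : ℂ × ℂ) (F : Entire) (p : ℂ × ℂ) :
    ((Dvec v F : Entire) : ℂ × ℂ → ℂ) p = fderiv ℂ (F : ℂ × ℂ → ℂ) p v := rfl

lemma Dx_xc : Dx xc = 1 := Subtype.ext <| funext fun p => by
  show fderiv ℂ (fun q : ℂ × ℂ => q.1) p (1, 0) = 1
  rw [fderiv_fst]; rfl

lemma Dy_xc : Dy xc = 0 := Subtype.ext <| funext fun p => by
  show fderiv ℂ (fun q : ℂ × ℂ => q.1) p (0, 1) = 0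
  rw [fderiv_fst]; rfl

lemma Dx_yc : Dx yc = 0 := Subtype.ext <| funext fun p => by
  show fderiv ℂ (fun q : ℂ × ℂ => q.2) p (1, 0) = 0
  rw [fderiv_snd]; rfl

lemma Dy_yc : Dy yc = 1 := Subtype.ext <| funext fun p => by
  show fderiv ℂ (fun q : ℂ × ℂ => q.2) p (0, 1) = 1
  rw [fderiv_snd]; rfl

lemma hasFDerivAt_ofY (f : ℂ → ℂ) (hf : AnalyticOnNhd ℂ f Set.univ) (p : ℂ × ℂ) :
    HasFDerivAt (fun q : ℂ × ℂ => f q.2)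
      ((deriv f p.2) • ((ContinuousLinearMap.snd ℂ ℂ ℂ))) p := by
  have h1 : HasDerivAt f (deriv f p.2) p.2 :=
    ((hf p.2 trivial).differentiableAt).hasDerivAt
  have := h1.hasFDerivAt.comp p hasFDerivAt_snd
  refine this.congr_fderiv ?_
  refine ContinuousLinearMap.ext fun v => ?_
  simp [mul_comm]

lemma Dx_ofY (f : ℂ → ℂ) (hf : AnalyticOnNhd ℂ f Set.univ) :
    Dx (ofY f hf) = 0 := Subtype.ext <| funext fun p => by
  show fderiv ℂ (fun q : ℂ × ℂ => f q.2) p (1, 0) = 0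
  rw [(hasFDerivAt_ofY f hf p).fderiv]
  simp

lemma Dy_ofY (f : ℂ → ℂ) (hf : AnalyticOnNhd ℂ f Set.univ) :
    Dy (ofY f hf) = ofY (deriv f) hf.deriv := Subtype.ext <| funext fun p => by
  show fderiv ℂ (fun q : ℂ × ℂ => f q.2) p (0, 1) = deriv f p.2
  rw [(hasFDerivAt_ofY f hf p).fderiv]
  simp

lemma hasFDerivAt_ex (c : ℂ) (p : ℂ × ℂ) :
    HasFDerivAt (fun q : ℂ × ℂ => Complex.exp (c * q.1))
      ((Complex.exp (c * p.1)) • (c • (ContinuousLinearMap.fst ℂ ℂ ℂ))) p := by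
  have h1 : HasFDerivAt (fun q : ℂ × ℂ => c * q.1)
      (c • (ContinuousLinearMap.fst ℂ ℂ ℂ)) p := hasFDerivAt_fst.const_smul c
  exact h1.cexp

lemma Dx_ex (c : ℂ) : Dx (ex c) = c • ex c := Subtype.ext <| funext fun p => by
  show fderiv ℂ (fun q : ℂ × ℂ => Complex.exp (c * q.1)) p (1, 0) = c * Complex.exp (c * p.1)
  rw [(hasFDerivAt_ex c p).fderiv]
  simp [mul_comm]

lemma Dy_ex (c : ℂ) : Dy (ex c) = 0 := Subtype.ext <| funext fun p => by
  show fderiv ℂ (fun q : ℂ × ℂ => Complex.exp (c * q.1)) p (0, 1) = 0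
  rw [(hasFDerivAt_ex c p).fderiv]
  simp

/-- If `V = exp(dx)(f(y)∂ₓ + g(y)∂_y)` commutes with `X = exp(x)∂_y`, then
`V = exp(dx)(κ∂ₓ + (κy + ℓ)∂_y)` for some constants `κ, ℓ ∈ ℂ`. -/
theorem statement_7 (d : ℂ) (f g : ℂ → ℂ) (hf : AnalyticOnNhd ℂ f Set.univ)
    (hg : AnalyticOnNhd ℂ g Set.univ)
    (h : ⁅Xb, (ex d * ofY f hf) • Dx + (ex d * ofY g hg) • Dy⁆ = 0) :
    ∃ κ ℓ : ℂ, (ex d * ofY f hf) • Dx + (ex d * ofY g hg) • Dy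
      = (ex d * algebraMap ℂ Entire κ) • Dx
        + (ex d * (κ • yc + algebraMap ℂ Entire ℓ)) • Dy := by
  set V : VF := (ex d * ofY f hf) • Dx + (ex d * ofY g hg) • Dy with hV
  -- evaluate the bracket on the coordinate function x
  have hVxc : V xc = ex d * ofY f hf := by
    show (ex d * ofY f hf) • Dx xc + (ex d * ofY g hg) • Dy xc = _
    rw [Dx_xc, Dy_xc, smul_zero, add_zero, smul_eq_mul, mul_one]
  have hVyc : V yc = ex d * ofY g hg := by
    show (ex d * ofY f hf) • Dx yc + (ex d * ofY g hg) • Dy yc = _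
    rw [Dx_yc, Dy_yc, smul_zero, zero_add, smul_eq_mul, mul_one]
  have hXbxc : Xb xc = 0 := by
    show ex 1 • Dy xc = 0
    rw [Dy_xc, smul_zero]
  have hXbyc : Xb yc = ex 1 := by
    show ex 1 • Dy yc = ex 1
    rw [Dy_yc, smul_eq_mul, mul_one]
  have hXbmul : ∀ (u : ℂ → ℂ) (hu : AnalyticOnNhd ℂ u Set.univ),
      Xb (ex d * ofY u hu) = ex 1 * (ex d * ofY (deriv u) hu.deriv) := by
    intro u hu
    show ex 1 • Dy (ex d * ofY u hu) = _
    rw [Derivation.leibniz, Dy_ex, Dy_ofY, smul_zero, add_zero, smul_eq_mul, smul_eq_mul]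
  -- first component equation: deriv f = 0
  have h1 : ∀ y : ℂ, deriv f y = 0 := by
    intro y
    have hb : (⁅Xb, V⁆ : VF) xc = 0 := by rw [h]; rfl
    rw [Derivation.commutator_apply, hVxc, hXbxc, map_zero, sub_zero, hXbmul f hf] at hb
    have := congrFun (congrArg Subtype.val hb) (0, y)
    simpa [ex, ofY, Complex.exp_ne_zero] using this
  -- second component equation: deriv g = f
  have h2 : ∀ y : ℂ, deriv g y = f y := by
    intro y
    have hb : (⁅Xb, V⁆ : VF) yc = 0 := by rw [h]; rfl
    rw [Derivation.commutator_apply, hVyc, hXbyc, hXbmul g hg] at hb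
    have hVex : V (ex 1) = (ex d * ofY f hf) * ex 1 := by
      show (ex d * ofY f hf) • Dx (ex 1) + (ex d * ofY g hg) • Dy (ex 1) = _
      rw [Dx_ex, Dy_ex, smul_zero, add_zero, smul_eq_mul, one_smul]
    rw [hVex] at hb
    have := congrFun (congrArg Subtype.val hb) (0, y)
    have h2' : Complex.exp (1 * 0) * (Complex.exp (d * 0) * deriv g y)
        - Complex.exp (d * 0) * f y * Complex.exp (1 * 0) = 0 := this
    simp only [mul_zero, Complex.exp_zero, one_mul, mul_one] at h2'
    exact sub_eq_zero.mp h2'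
  -- f is constant
  have hfd : Differentiable ℂ f := fun z => (hf z trivial).differentiableAt
  have hgd : Differentiable ℂ g := fun z => (hg z trivial).differentiableAt
  have hfc : ∀ y : ℂ, f y = f 0 := fun y => is_const_of_deriv_eq_zero hfd h1 y 0
  refine ⟨f 0, g 0, ?_⟩
  have hgc : ∀ y : ℂ, g y = f 0 * y + g 0 := by
    intro y
    have hφd : Differentiable ℂ (fun y => g y - f 0 * y) :=
      hgd.sub ((differentiable_id.const_mul _))
    have hφ : ∀ y : ℂ, deriv (fun y => g y - f 0 * y) y = 0 := by
      intro y
      have hd : HasDerivAt (fun y : ℂ => g y - f 0 * y) (deriv g y - f 0 * 1) y :=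
        (hgd y).hasDerivAt.sub ((hasDerivAt_id y).const_mul (f 0))
      rw [hd.deriv, h2 y, hfc y]
      ring
    have := is_const_of_deriv_eq_zero hφd hφ y 0
    simp only [mul_zero, sub_zero] at this
    linear_combination this
  have e1 : ofY f hf = algebraMap ℂ Entire (f 0) := Subtype.ext <| funext fun p => hfc p.2
  have e2 : ofY g hg = (f 0) • yc + algebraMap ℂ Entire (g 0) :=
    Subtype.ext <| funext fun p => hgc p.2
  rw [hV, e1, e2]
end
end

section
/- Let Y = exp(−x)(y∂_x + (y²/2 + ε)∂_y) in V(ℂ²) with ε ∈ ℂ, and let V = exp(dx)∂_y for d ∈ ℂ. Then [V,[Y,V]] = (2d−1)exp((2d−1)x)∂_y; in particular [V,[Y,V]] = 0 if and only if d = 1/2. Moreover, for d = 1/2 one has (ad Y)²(V) = exp(−3x/2)·ε(1/2 − 2)·∂_y, so (ad Y)²(V) = 0 if and only if ε = 0. -/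
open Complex Module Set

set_option synthInstance.maxHeartbeats 1000000
set_option maxHeartbeats 1000000

noncomputable section

namespace St9

lemma entire_ext {f g : Entire} (h : ∀ p, (f : ℂ × ℂ → ℂ) p = (g : ℂ × ℂ → ℂ) p) : f = g :=
  Subtype.ext (funext h)

theorem bracket_dvec (v w : ℂ × ℂ) : ⁅Dvec v, Dvec w⁆ = 0 := by
  apply Derivation.ext; intro f
  apply entire_ext
  intro p
  rw [Derivation.commutator_apply]
  have hf : AnalyticOnNhd ℂ (f : ℂ × ℂ → ℂ) Set.univ := f.2
  have hd : ∀ y, HasFDerivAt (f : ℂ × ℂ → ℂ) (fderiv ℂ (f : ℂ × ℂ → ℂ) y) y :=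
    fun y => (Entire.diffAt f y).hasFDerivAt
  have h2 : DifferentiableAt ℂ (fderiv ℂ (f : ℂ × ℂ → ℂ)) p :=
    ((hf.fderiv) p trivial).differentiableAt
  have hsym := second_derivative_symmetric hd h2.hasFDerivAt v w
  have key : ∀ u u' : ℂ × ℂ,
      fderiv ℂ (fun q => fderiv ℂ (f : ℂ × ℂ → ℂ) q u) p u'
        = fderiv ℂ (fderiv ℂ (f : ℂ × ℂ → ℂ)) p u' u := by
    intro u u'
    have h : HasFDerivAt (fun q => fderiv ℂ (f : ℂ × ℂ → ℂ) q u)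
        ((ContinuousLinearMap.apply ℂ ℂ u).comp (fderiv ℂ (fderiv ℂ (f : ℂ × ℂ → ℂ)) p)) p :=
      ((ContinuousLinearMap.apply ℂ ℂ u).hasFDerivAt).comp p h2.hasFDerivAt
    rw [h.fderiv]; rfl
  have : ((Dvec v (Dvec w f) - Dvec w (Dvec v f) : Entire) : ℂ × ℂ → ℂ) p
      = fderiv ℂ (fun q => fderiv ℂ (f : ℂ × ℂ → ℂ) q w) p v
        - fderiv ℂ (fun q => fderiv ℂ (f : ℂ × ℂ → ℂ) q v) p w := rfl
  rw [this, key w v, key v w, hsym]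
  simp

lemma smul_lie' (a : Entire) (X Y : VF) : ⁅a • X, Y⁆ = a • ⁅X, Y⁆ - (Y a) • X := by
  apply Derivation.ext; intro f
  simp only [Derivation.commutator_apply, Derivation.sub_apply, Derivation.smul_apply,
    Derivation.leibniz, smul_eq_mul]
  ring

lemma lie_smul' (a : Entire) (X Y : VF) : ⁅X, a • Y⁆ = a • ⁅X, Y⁆ + (X a) • Y := by
  apply Derivation.ext; intro f
  simp only [Derivation.commutator_apply, Derivation.add_apply, Derivation.smul_apply,
    Derivation.leibniz, smul_eq_mul]
  ring

lemma smul_dvec_lie (a b : Entire) (v w : ℂ × ℂ) :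
    ⁅a • Dvec v, b • Dvec w⁆
      = (a * Dvec v b) • Dvec w - (b * Dvec w a) • Dvec v := by
  rw [lie_smul', smul_lie', bracket_dvec, smul_zero, zero_sub, smul_neg, smul_smul,
    Derivation.smul_apply, smul_eq_mul]
  abel

lemma coe_mul' (f g : Entire) (p : ℂ × ℂ) :
    ((f * g : Entire) : ℂ × ℂ → ℂ) p = (f : ℂ × ℂ → ℂ) p * (g : ℂ × ℂ → ℂ) p := rfl

lemma coe_add' (f g : Entire) (p : ℂ × ℂ) :
    ((f + g : Entire) : ℂ × ℂ → ℂ) p = (f : ℂ × ℂ → ℂ) p + (g : ℂ × ℂ → ℂ) p := rfl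

lemma coe_sub' (f g : Entire) (p : ℂ × ℂ) :
    ((f - g : Entire) : ℂ × ℂ → ℂ) p = (f : ℂ × ℂ → ℂ) p - (g : ℂ × ℂ → ℂ) p := rfl

lemma coe_neg' (f : Entire) (p : ℂ × ℂ) :
    ((-f : Entire) : ℂ × ℂ → ℂ) p = -((f : ℂ × ℂ → ℂ) p) := rfl

lemma coe_csmul (c : ℂ) (f : Entire) (p : ℂ × ℂ) :
    ((c • f : Entire) : ℂ × ℂ → ℂ) p = c * (f : ℂ × ℂ → ℂ) p := rfl

lemma coe_algebraMap' (c : ℂ) (p : ℂ × ℂ) :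
    ((algebraMap ℂ Entire c : Entire) : ℂ × ℂ → ℂ) p = c := rfl

lemma coe_one' (p : ℂ × ℂ) : ((1 : Entire) : ℂ × ℂ → ℂ) p = 1 := rfl

lemma coe_zero' (p : ℂ × ℂ) : ((0 : Entire) : ℂ × ℂ → ℂ) p = 0 := rfl

lemma ex_apply (c : ℂ) (p : ℂ × ℂ) :
    ((ex c : Entire) : ℂ × ℂ → ℂ) p = Complex.exp (c * p.1) := rfl

lemma yc_apply (p : ℂ × ℂ) : ((yc : Entire) : ℂ × ℂ → ℂ) p = p.2 := rfl

lemma dvec_ex (v : ℂ × ℂ) (c : ℂ) : Dvec v (ex c) = (c * v.1) • ex c := by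
  apply entire_ext
  intro p
  have h1 : HasFDerivAt (fun q : ℂ × ℂ => c * q.1) (c • ContinuousLinearMap.fst ℂ ℂ ℂ) p :=
    hasFDerivAt_fst.const_mul c
  have h2 := h1.cexp
  show fderiv ℂ (fun q : ℂ × ℂ => Complex.exp (c * q.1)) p v = _
  rw [h2.fderiv, coe_csmul, ex_apply]
  simp only [ContinuousLinearMap.smul_apply, ContinuousLinearMap.coe_fst', smul_eq_mul]
  ring

lemma dvec_yc (v : ℂ × ℂ) : Dvec v yc = algebraMap ℂ Entire v.2 := by
  apply entire_ext
  intro p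
  show fderiv ℂ (fun q : ℂ × ℂ => q.2) p v = _
  rw [coe_algebraMap', hasFDerivAt_snd.fderiv]
  rfl

lemma Dx_ex (c : ℂ) : Dvec (1, 0) (ex c) = c • ex c := by
  rw [dvec_ex]; norm_num

lemma Dy_ex (c : ℂ) : Dvec (0, 1) (ex c) = 0 := by
  rw [dvec_ex]; norm_num

lemma Dx_yc : Dvec (1, 0) yc = 0 := by
  rw [dvec_yc]; exact map_zero _

lemma Dy_yc : Dvec (0, 1) yc = 1 := by
  rw [dvec_yc]; exact map_one _

lemma csmul_esmul (c : ℂ) (a : Entire) (X : VF) : (c • a) • X = c • (a • X) := by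
  apply Derivation.ext; intro f
  simp only [Derivation.smul_apply, smul_assoc]

lemma field_bracket (a b c e : Entire) :
    ⁅a • Dvec (1, 0) + b • Dvec (0, 1), c • Dvec (1, 0) + e • Dvec (0, 1)⁆
      = (a * Dvec (1, 0) c + b * Dvec (0, 1) c - c * Dvec (1, 0) a - e * Dvec (0, 1) a)
          • Dvec (1, 0)
        + (a * Dvec (1, 0) e + b * Dvec (0, 1) e - c * Dvec (1, 0) b - e * Dvec (0, 1) b)
          • Dvec (0, 1) := by
  rw [add_lie, lie_add, lie_add, smul_dvec_lie, smul_dvec_lie, smul_dvec_lie, smul_dvec_lie]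
  simp only [sub_smul, add_smul]
  abel

lemma Evf_eq (d : ℂ) : Evf d = (0 : Entire) • Dvec (1, 0) + ex d • Dvec (0, 1) := by
  rw [Evf, Dy, zero_smul, zero_add]

lemma Yb_eq (ε : ℂ) :
    Yb ε = (ex (-1) * yc) • Dvec (1, 0)
      + (ex (-1) * (((1 : ℂ) / 2) • yc ^ 2 + algebraMap ℂ Entire ε)) • Dvec (0, 1) := rfl

lemma bYE (ε d : ℂ) :
    ⁅Yb ε, Evf d⁆ = (-(ex (-1) * ex d)) • Dvec (1, 0)
      + ((d - 1) • (ex (-1) * ex d * yc)) • Dvec (0, 1) := by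
  rw [Yb_eq, Evf_eq, field_bracket]
  congr 1
  · congr 1
    simp only [Derivation.leibniz, Derivation.map_algebraMap, Derivation.map_smul,
      Derivation.map_add, pow_two, Dx_ex, Dy_ex, Dx_yc, Dy_yc, map_zero, smul_zero,
      zero_smul, add_zero, zero_add, mul_zero, zero_mul, smul_eq_mul, mul_one]
    apply entire_ext; intro p
    simp only [coe_mul', coe_add', coe_sub', coe_neg', coe_csmul, coe_algebraMap', coe_one',
      coe_zero', ex_apply, yc_apply]
    ring
  · congr 1
    simp only [Derivation.leibniz, Derivation.map_algebraMap, Derivation.map_smul,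
      Derivation.map_add, pow_two, Dx_ex, Dy_ex, Dx_yc, Dy_yc, map_zero, smul_zero,
      zero_smul, add_zero, zero_add, mul_zero, zero_mul, smul_eq_mul, mul_one]
    apply entire_ext; intro p
    simp only [coe_mul', coe_add', coe_sub', coe_neg', coe_csmul, coe_algebraMap', coe_one',
      coe_zero', ex_apply, yc_apply]
    ring

lemma main1 (ε d : ℂ) :
    ⁅Evf d, ⁅Yb ε, Evf d⁆⁆ = (2 * d - 1) • Evf (2 * d - 1) := by
  rw [bYE, Evf_eq, field_bracket]
  rw [show (2 * d - 1) • Evf (2 * d - 1)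
      = (0 : Entire) • Dvec (1, 0) + ((2 * d - 1) • ex (2 * d - 1)) • Dvec (0, 1) by
    rw [Evf, Dy, csmul_esmul, zero_smul, zero_add]]
  congr 1
  · congr 1
    simp only [Derivation.leibniz, Derivation.map_algebraMap, Derivation.map_smul,
      Derivation.map_add, Derivation.map_neg, pow_two, Dx_ex, Dy_ex, Dx_yc, Dy_yc, map_zero,
      smul_zero, zero_smul, add_zero, zero_add, mul_zero, zero_mul, smul_eq_mul, mul_one,
      neg_zero]
    apply entire_ext; intro p
    simp only [coe_mul', coe_add', coe_sub', coe_neg', coe_csmul, coe_algebraMap', coe_one',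
      coe_zero', ex_apply, yc_apply]
    ring
  · congr 1
    simp only [Derivation.leibniz, Derivation.map_algebraMap, Derivation.map_smul,
      Derivation.map_add, Derivation.map_neg, pow_two, Dx_ex, Dy_ex, Dx_yc, Dy_yc, map_zero,
      smul_zero, zero_smul, add_zero, zero_add, mul_zero, zero_mul, smul_eq_mul, mul_one,
      neg_zero]
    apply entire_ext; intro p
    simp only [coe_mul', coe_add', coe_sub', coe_neg', coe_csmul, coe_algebraMap', coe_one',
      coe_zero', ex_apply, yc_apply]
    rw [show (2 * d - 1) * p.1 = d * p.1 + (d * p.1 + -1 * p.1) by ring, Complex.exp_add,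
      Complex.exp_add]
    ring

lemma main2 (ε : ℂ) :
    ⁅Yb ε, ⁅Yb ε, Evf (1 / 2)⁆⁆ = (ε * (1 / 2 - 2)) • Evf (-(3 : ℂ) / 2) := by
  rw [bYE, Yb_eq, field_bracket]
  rw [show (ε * (1 / 2 - 2)) • Evf (-(3 : ℂ) / 2)
      = (0 : Entire) • Dvec (1, 0) + ((ε * (1 / 2 - 2)) • ex (-(3 : ℂ) / 2)) • Dvec (0, 1) by
    rw [Evf, Dy, csmul_esmul, zero_smul, zero_add]]
  congr 1
  · congr 1
    simp only [Derivation.leibniz, Derivation.map_algebraMap, Derivation.map_smul,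
      Derivation.map_add, Derivation.map_neg, pow_two, Dx_ex, Dy_ex, Dx_yc, Dy_yc, map_zero,
      smul_zero, zero_smul, add_zero, zero_add, mul_zero, zero_mul, smul_eq_mul, mul_one,
      neg_zero]
    apply entire_ext; intro p
    simp only [coe_mul', coe_add', coe_sub', coe_neg', coe_csmul, coe_algebraMap', coe_one',
      coe_zero', ex_apply, yc_apply]
    ring
  · congr 1
    simp only [Derivation.leibniz, Derivation.map_algebraMap, Derivation.map_smul,
      Derivation.map_add, Derivation.map_neg, pow_two, Dx_ex, Dy_ex, Dx_yc, Dy_yc, map_zero,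
      smul_zero, zero_smul, add_zero, zero_add, mul_zero, zero_mul, smul_eq_mul, mul_one,
      neg_zero]
    apply entire_ext; intro p
    simp only [coe_mul', coe_add', coe_sub', coe_neg', coe_csmul, coe_algebraMap', coe_one',
      coe_zero', ex_apply, yc_apply]
    rw [show (-(3 : ℂ) / 2) * p.1 = -1 * p.1 + (-1 * p.1 + (1 / 2) * p.1) by ring,
      Complex.exp_add, Complex.exp_add]
    ring

lemma smul_Evf_zero {c e : ℂ} (h : c • Evf e = 0) : c = 0 := by
  have h2 := congrArg (fun D : VF => ((D yc : Entire) : ℂ × ℂ → ℂ) (0, 0)) h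
  simp only [Evf, Dy, Derivation.smul_apply, Derivation.zero_apply] at h2
  rw [Dy_yc] at h2
  have h3 : c * (Complex.exp (e * (0 : ℂ)) * 1) = 0 := h2
  simpa using h3

end St9

open St9 in

/-- For `Y = exp(−x)(y∂ₓ + (y²/2 + ε)∂_y)` and `V = exp(dx)∂_y` one has
`[V,[Y,V]] = (2d−1)exp((2d−1)x)∂_y`, which vanishes iff `d = 1/2`; and for `d = 1/2`,
`(ad Y)²(V) = exp(−3x/2)·ε(1/2 − 2)·∂_y`, which vanishes iff `ε = 0`. -/
theorem statement_9 (ε d : ℂ) :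
    ⁅Evf d, ⁅Yb ε, Evf d⁆⁆ = (2 * d - 1) • Evf (2 * d - 1) ∧
    (⁅Evf d, ⁅Yb ε, Evf d⁆⁆ = 0 ↔ d = 1 / 2) ∧
    (d = 1 / 2 →
      ⁅Yb ε, ⁅Yb ε, Evf d⁆⁆ = (ε * (1 / 2 - 2)) • Evf (-(3 : ℂ) / 2) ∧
      (⁅Yb ε, ⁅Yb ε, Evf d⁆⁆ = 0 ↔ ε = 0)) := by
  refine ⟨main1 ε d, ⟨fun h => ?_, fun h => ?_⟩, fun h => ?_⟩
  · have h0 : (2 * d - 1) • Evf (2 * d - 1) = 0 := by rw [← main1 ε d, h]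
    have := smul_Evf_zero h0
    linear_combination this / 2
  · rw [main1, h]; norm_num
  · subst h
    refine ⟨main2 ε, fun h2 => ?_, fun h2 => ?_⟩
    · have h0 : (ε * (1 / 2 - 2)) • Evf (-(3 : ℂ) / 2) = 0 := by rw [← main2 ε, h2]
      have h3 := smul_Evf_zero h0
      rcases mul_eq_zero.1 h3 with h4 | h4
      · exact h4
      · norm_num at h4
    · rw [main2, h2]; simp
end
end
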